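/- arXiv:2207.08460 — 2 statements merged into one kernel-verified Lean document; each statement's English description precedes it below -/
import Mathlib

section
/- Let λ₁,…,λ_k be non-zero complex numbers, ε ∈ ℂ, and α = (α₁,…,α_k) a multi-index. Order multi-indices of equal total degree lexicographically (β ≺ α iff β_i < α_i at the smallest index i where they differ). Then in the expansion of ∏_{l=1}^{k−1}(λ_l z_l + ε z_{l+1})^{α_l} · (λ_k z_k)^{α_k} − ∏_{l=1}^{k}(λ_l z_l)^{α_l} as a linear combination of monomials z^β, every monomial z^β appearing with non-zero coefficient satisfies |β| = |α| and β ≺ α (strictly smaller in lexicographic order). -/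
open MvPolynomial

-- prod of monomials
lemma my_prod_monomial {σ : Type*} {ι : Type*} (s : Finset ι) (d : ι → σ →₀ ℕ) (c : ι → ℂ) :
    (∏ i ∈ s, (monomial (d i) (c i) : MvPolynomial σ ℂ)) = monomial (∑ i ∈ s, d i) (∏ i ∈ s, c i) := by
  classical
  induction s using Finset.induction with
  | empty => simp [monomial_zero']
  | insert _ _ h ih => simp [Finset.prod_insert h, Finset.sum_insert h, ih, monomial_mul]

-- factor expansion
lemma my_factor (σ : Type*) [DecidableEq σ] (a b : ℂ) (i j : σ) (m : ℕ) :
    (C a * X i + C b * X j : MvPolynomial σ ℂ) ^ m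
      = ∑ k ∈ Finset.range (m+1),
          monomial (Finsupp.single i k + Finsupp.single j (m-k))
            (a^k * b^(m-k) * (m.choose k)) := by
  rw [add_pow]
  refine Finset.sum_congr rfl fun k _ => ?_
  rw [mul_pow, ← C_pow, mul_pow, ← C_pow, C_mul_X_pow_eq_monomial, C_mul_X_pow_eq_monomial,
    monomial_mul, ← map_natCast (C : ℂ →+* MvPolynomial σ ℂ) (m.choose k)]
  rw [C_apply, monomial_mul, add_zero]

noncomputable def myGam (n : ℕ) (α : Fin (n+1) → ℕ) (g : Fin n → ℕ) : Fin (n+1) →₀ ℕ :=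
  (∑ l : Fin n, (Finsupp.single l.castSucc (g l) + Finsupp.single l.succ (α l.castSucc - g l)))
    + Finsupp.single (Fin.last n) (α (Fin.last n))

noncomputable def myK (n : ℕ) (lam : Fin (n+1) → ℂ) (ε : ℂ) (α : Fin (n+1) → ℕ) (g : Fin n → ℕ) : ℂ :=
  (∏ l : Fin n, lam l.castSucc ^ g l * ε ^ (α l.castSucc - g l) * ((α l.castSucc).choose (g l) : ℂ))
    * lam (Fin.last n) ^ α (Fin.last n)

lemma my_expand (n : ℕ) (lam : Fin (n+1) → ℂ) (ε : ℂ) (α : Fin (n+1) → ℕ) :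
    ((∏ l : Fin n,
        (C (lam l.castSucc) * X l.castSucc + C ε * X l.succ) ^ α l.castSucc) *
      (C (lam (Fin.last n)) * X (Fin.last n)) ^ α (Fin.last n) : MvPolynomial (Fin (n+1)) ℂ)
    = ∑ g ∈ Fintype.piFinset (fun l : Fin n => Finset.range (α l.castSucc + 1)),
        monomial (myGam n α g) (myK n lam ε α g) := by
  have h1 : ∀ l : Fin n, (C (lam l.castSucc) * X l.castSucc + C ε * X l.succ
        : MvPolynomial (Fin (n+1)) ℂ) ^ α l.castSucc
      = ∑ k ∈ Finset.range (α l.castSucc + 1),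
          monomial (Finsupp.single l.castSucc k + Finsupp.single l.succ (α l.castSucc - k))
            (lam l.castSucc ^ k * ε ^ (α l.castSucc - k) * ((α l.castSucc).choose k : ℂ)) :=
    fun l => my_factor _ _ _ _ _ _
  simp_rw [h1]
  rw [Finset.prod_univ_sum]
  rw [Finset.sum_mul]
  refine Finset.sum_congr rfl fun g _ => ?_
  rw [my_prod_monomial, mul_pow, ← C_pow, C_mul_X_pow_eq_monomial, monomial_mul]
  rfl


lemma my_e1 (n : ℕ) (g : Fin n → ℕ) (i : Fin (n+1)) :
    (∑ l : Fin n, if l.castSucc = i then g l else 0)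
      = if h : (i : ℕ) < n then g ⟨i, h⟩ else 0 := by
  by_cases h : (i : ℕ) < n
  · rw [dif_pos h]
    have hc : ∀ l : Fin n, (l.castSucc = i) ↔ l = ⟨i, h⟩ := by
      intro l
      rw [Fin.ext_iff, Fin.ext_iff]
      simp
    simp_rw [hc]
    simp
  · rw [dif_neg h]
    apply Finset.sum_eq_zero
    intro l _
    rw [if_neg]
    intro hl
    apply h
    rw [← hl]
    simpa using l.isLt

lemma my_e2 (n : ℕ) (v : Fin n → ℕ) (i : Fin (n+1)) :
    (∑ l : Fin n, if l.succ = i then v l else 0)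
      = if h : 0 < (i : ℕ) then v ⟨(i:ℕ) - 1, by have := i.isLt; omega⟩ else 0 := by
  by_cases h : 0 < (i : ℕ)
  · rw [dif_pos h]
    have hlt : (i:ℕ) - 1 < n := by have := i.isLt; omega
    have hc : ∀ l : Fin n, (l.succ = i) ↔ l = ⟨(i:ℕ)-1, hlt⟩ := by
      intro l
      rw [Fin.ext_iff, Fin.ext_iff]
      simp
      omega
    simp_rw [hc]
    simp
  · rw [dif_neg h]
    apply Finset.sum_eq_zero
    intro l _
    rw [if_neg]
    intro hl
    apply h
    rw [← hl]
    simp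

lemma myGam_apply (n : ℕ) (α : Fin (n+1) → ℕ) (g : Fin n → ℕ) (i : Fin (n+1)) :
    myGam n α g i
      = (if h : (i : ℕ) < n then g ⟨i, h⟩ else α i)
        + (if h : 0 < (i : ℕ) then
            α (Fin.castSucc ⟨(i:ℕ) - 1, by have := i.isLt; omega⟩)
              - g ⟨(i:ℕ) - 1, by have := i.isLt; omega⟩ else 0) := by
  classical
  unfold myGam
  rw [Finsupp.add_apply, Finsupp.finset_sum_apply]
  simp_rw [Finsupp.add_apply, Finset.sum_add_distrib, Finsupp.single_apply]
  rw [my_e1, my_e2 n (fun l => α l.castSucc - g l) i]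
  have e3 : (if Fin.last n = i then α (Fin.last n) else 0)
      = if (i:ℕ) < n then 0 else α i := by
    by_cases h : Fin.last n = i
    · rw [if_pos h, if_neg (by rw [← h]; simp), h]
    · rw [if_neg h, if_pos]
      by_contra hc
      apply h
      apply Fin.ext
      have := i.isLt
      simp
      omega
  rw [e3]
  by_cases h1 : (i:ℕ) < n <;> by_cases h2 : 0 < (i:ℕ) <;>
    simp [h1, h2, Nat.add_comm]

lemma myGam_sum (n : ℕ) (α : Fin (n+1) → ℕ) (g : Fin n → ℕ)
    (hg : ∀ l, g l ≤ α l.castSucc) :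
    (∑ i, myGam n α g i) = ∑ i, α i := by
  unfold myGam
  simp_rw [Finsupp.add_apply, Finsupp.finset_sum_apply, Finsupp.add_apply,
    Finset.sum_add_distrib, Finsupp.single_apply]
  rw [Finset.sum_comm]
  conv_lhs => rw [Finset.sum_comm (γ := Fin (n+1))]
  simp only [Finset.sum_ite_eq, Finset.sum_ite_eq', Finset.mem_univ, if_pos]
  have step : (∑ l : Fin n, g l) + (∑ l : Fin n, (α l.castSucc - g l))
      = ∑ l : Fin n, α l.castSucc := by
    rw [← Finset.sum_add_distrib]
    apply Finset.sum_congr rfl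
    intro l _
    have := hg l
    omega
  rw [step, ← Fin.sum_univ_castSucc (f := α)]

lemma my_prefix (n : ℕ) (α : Fin (n+1) → ℕ) (g : Fin n → ℕ) (i : ℕ)
    (hβ : ∀ j : Fin (n+1), (j : ℕ) < i → myGam n α g j = α j) :
    ∀ l : Fin n, (l : ℕ) < i → g l = α l.castSucc := by
  have key : ∀ m : ℕ, ∀ l : Fin n, (l : ℕ) = m → (l : ℕ) < i → g l = α l.castSucc := by
    intro m
    induction m using Nat.strong_induction_on with
    | _ m ih =>
      intro l hlm hli
      have hΓ := hβ l.castSucc (by simpa using hli)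
      rw [myGam_apply] at hΓ
      simp only [Fin.coe_castSucc] at hΓ
      by_cases h0 : 0 < (l : ℕ)
      · have hlt : (l:ℕ) - 1 < n := by have := l.isLt; omega
        have hprev : g ⟨(l:ℕ)-1, hlt⟩ = α (Fin.castSucc ⟨(l:ℕ)-1, hlt⟩) :=
          ih ((l:ℕ)-1) (by omega) _ rfl (by simp only [Fin.val_mk]; omega)
        rw [dif_pos (show ((l:ℕ)) < n from l.isLt), dif_pos h0] at hΓ
        have hg' : (⟨(l:ℕ), l.isLt⟩ : Fin n) = l := Fin.ext rfl
        rw [hg'] at hΓ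
        rw [hprev] at hΓ
        simpa [Nat.sub_self] using hΓ
      · rw [dif_pos (show ((l:ℕ)) < n from l.isLt), dif_neg h0] at hΓ
        have hg' : (⟨(l:ℕ), l.isLt⟩ : Fin n) = l := Fin.ext rfl
        rw [hg'] at hΓ
        simpa using hΓ
  exact fun l => key (l : ℕ) l rfl


open MvPolynomial in
/-- The remainder of the composition of a monomial `z^α` with a Jordan block:
every monomial `z^β` appearing with non-zero coefficient in
`∏_{l<k}(λ_l z_l + ε z_{l+1})^{α_l} (λ_k z_k)^{α_k} - ∏_l (λ_l z_l)^{α_l}`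
has the same total degree as `α` and is strictly smaller than `α` in the
lexicographic order. -/
theorem stmt18 (n : ℕ) (lam : Fin (n + 1) → ℂ) (hlam : ∀ i, lam i ≠ 0)
    (ε : ℂ) (α : Fin (n + 1) → ℕ) :
    ∀ β : Fin (n + 1) →₀ ℕ,
      MvPolynomial.coeff β
        ((∏ l : Fin n,
            (C (lam l.castSucc) * X l.castSucc + C ε * X l.succ) ^ α l.castSucc) *
          (C (lam (Fin.last n)) * X (Fin.last n)) ^ α (Fin.last n)
        - ∏ i : Fin (n + 1), (C (lam i) * X i) ^ α i) ≠ 0 →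
      (∑ i, β i) = (∑ i, α i) ∧
        ∃ i : Fin (n + 1), (∀ j, j < i → β j = α j) ∧ β i < α i := by
  classical
  intro β hβ
  have hQ : (∏ i : Fin (n+1), (C (lam i) * X i : MvPolynomial (Fin (n+1)) ℂ) ^ α i)
      = monomial (∑ i, Finsupp.single i (α i)) (∏ i, lam i ^ α i) := by
    rw [← my_prod_monomial]
    apply Finset.prod_congr rfl
    intro i _
    rw [mul_pow, ← C_pow, C_mul_X_pow_eq_monomial]
  rw [coeff_sub, my_expand, hQ, coeff_sum, coeff_monomial] at hβ
  simp_rw [coeff_monomial] at hβ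
  by_cases hcase : ∀ i, β i = α i
  · exfalso
    apply hβ
    have hβα : (∑ i, Finsupp.single i (α i) : Fin (n+1) →₀ ℕ) = β := by
      ext j
      rw [Finsupp.finset_sum_apply]
      simp_rw [Finsupp.single_apply]
      rw [Finset.sum_ite_eq', if_pos (Finset.mem_univ j), hcase j]
    have hgS : (fun l : Fin n => α l.castSucc) ∈
        Fintype.piFinset (fun l : Fin n => Finset.range (α l.castSucc + 1)) := by
      simp [Fintype.mem_piFinset, Nat.lt_succ_self]
    have hΓg : myGam n α (fun l : Fin n => α l.castSucc) = β := by
      ext j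
      rw [myGam_apply, hcase j]
      by_cases h1 : (j:ℕ) < n <;> by_cases h2 : 0 < (j:ℕ)
      · rw [dif_pos h1, dif_pos h2]
        have : (⟨(j:ℕ), h1⟩ : Fin n).castSucc = j := Fin.ext rfl
        rw [this]
        omega
      · rw [dif_pos h1, dif_neg h2]
        have : (⟨(j:ℕ), h1⟩ : Fin n).castSucc = j := Fin.ext rfl
        rw [this]
        omega
      · rw [dif_neg h1, dif_pos h2]; omega
      · rw [dif_neg h1, dif_neg h2]
        omega
    rw [Finset.sum_eq_single (fun l : Fin n => α l.castSucc)]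
    · rw [if_pos hΓg, if_pos hβα]
      unfold myK
      have h1 : ∀ l : Fin n,
          lam l.castSucc ^ α l.castSucc * ε ^ (α l.castSucc - α l.castSucc)
            * ((α l.castSucc).choose (α l.castSucc) : ℂ)
          = lam l.castSucc ^ α l.castSucc := by
        intro l
        simp [Nat.sub_self, Nat.choose_self]
      simp_rw [h1]
      rw [← Fin.prod_univ_castSucc (f := fun i => lam i ^ α i)]
      ring
    · intro b hbS hbne
      rw [if_neg]
      intro hc
      apply hbne
      funext l
      refine my_prefix n α b (n+1) ?_ l l.castSucc.isLt
      intro j _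
      rw [hc, hcase j]
    · intro hc
      exact absurd hgS hc
  · push_neg at hcase
    obtain ⟨i₀', hi₀'⟩ := hcase
    have hQ0 : (∑ i, Finsupp.single i (α i) : Fin (n+1) →₀ ℕ) ≠ β := by
      intro hc
      apply hi₀'
      rw [← hc, Finsupp.finset_sum_apply]
      simp_rw [Finsupp.single_apply]
      rw [Finset.sum_ite_eq', if_pos (Finset.mem_univ i₀')]
    rw [if_neg hQ0, sub_zero] at hβ
    obtain ⟨g, hgS, hne⟩ := Finset.exists_ne_zero_of_sum_ne_zero hβ
    have hΓ : myGam n α g = β := by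
      by_contra hc
      rw [if_neg hc] at hne
      exact hne rfl
    have hgb : ∀ l, g l ≤ α l.castSucc := by
      intro l
      have := (Fintype.mem_piFinset.mp hgS) l
      rw [Finset.mem_range] at this
      omega
    constructor
    · rw [← hΓ]
      exact myGam_sum n α g hgb
    · set T := Finset.univ.filter (fun i : Fin (n+1) => β i ≠ α i) with hT
      have hTne : T.Nonempty := ⟨i₀', by simp [hT, hi₀']⟩
      set i₀ := T.min' hTne with hi₀
      have hmem : β i₀ ≠ α i₀ := by
        have h : i₀ ∈ T := T.min'_mem hTne
        rw [hT, Finset.mem_filter] at h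
        exact h.2
      have hpre : ∀ j, j < i₀ → β j = α j := by
        intro j hj
        by_contra hc
        have : i₀ ≤ j := T.min'_le j (by simp [hT, hc])
        exact absurd hj (not_lt.mpr this)
      refine ⟨i₀, hpre, ?_⟩
      have hpre' : ∀ j : Fin (n+1), (j:ℕ) < (i₀:ℕ) → myGam n α g j = α j := by
        intro j hj
        rw [hΓ]
        exact hpre j hj
      have hgpre := my_prefix n α g (i₀:ℕ) hpre'
      have hβi : β i₀ = myGam n α g i₀ := by rw [hΓ]
      rw [hβi, myGam_apply] at hmem ⊢
      have hspill : (if h : 0 < (i₀:ℕ) then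
          α (Fin.castSucc ⟨(i₀:ℕ) - 1, by have := i₀.isLt; omega⟩)
            - g ⟨(i₀:ℕ) - 1, by have := i₀.isLt; omega⟩ else 0) = 0 := by
        by_cases h2 : 0 < (i₀:ℕ)
        · rw [dif_pos h2]
          rw [hgpre ⟨(i₀:ℕ) - 1, by have := i₀.isLt; omega⟩ (by simp only [Fin.val_mk]; omega)]
          omega
        · rw [dif_neg h2]
      rw [hspill] at hmem ⊢
      by_cases h1 : (i₀:ℕ) < n
      · rw [dif_pos h1] at hmem ⊢
        have hle := hgb ⟨(i₀:ℕ), h1⟩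
        have : (⟨(i₀:ℕ), h1⟩ : Fin n).castSucc = i₀ := Fin.ext rfl
        rw [this] at hle
        omega
      · rw [dif_neg h1] at hmem
        omega
end

section
/- Let φ be holomorphic on the polydisc B_{r} ⊂ ℂⁿ vanishing to order ≥ 2 at 0, with finite majorant norm |φ|_r. Let Λ = diag(λ₁,…,λ_n) and N the nilpotent part of a Jordan form, where all variables acted on non-trivially by N correspond to eigenvalues of modulus μ < 1, and assume ε < (1−μ)/2. Then there is a constant C̃ depending only on n and μ (not on r, ε, or φ) such that |φ∘(Λ + εN) − φ∘Λ|_r ≤ ε · C̃ · |φ|_r. -/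
open MvPolynomial Finset
open scoped Pointwise

noncomputable def pn {m : ℕ} (r : ℝ) (p : MvPolynomial (Fin m) ℂ) : ℝ :=
  ∑ β ∈ p.support, ‖MvPolynomial.coeff β p‖ * r ^ (∑ i, β i)

variable {m : ℕ} {r : ℝ}

lemma pn_eq_of_subset {p : MvPolynomial (Fin m) ℂ} {s : Finset (Fin m →₀ ℕ)}
    (hs : p.support ⊆ s) :
    pn r p = ∑ β ∈ s, ‖MvPolynomial.coeff β p‖ * r ^ (∑ i, β i) := by
  refine Finset.sum_subset hs fun β _ hβ => ?_
  rw [MvPolynomial.notMem_support_iff.mp hβ]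
  simp

lemma pn_nonneg (hr : 0 ≤ r) (p : MvPolynomial (Fin m) ℂ) : 0 ≤ pn r p := by
  refine Finset.sum_nonneg fun β _ => ?_
  positivity

lemma pn_tsum_eq (p : MvPolynomial (Fin m) ℂ) :
    ∑' β : Fin m →₀ ℕ, ‖MvPolynomial.coeff β p‖ * r ^ (∑ i, β i) = pn r p := by
  refine tsum_eq_sum fun β hβ => ?_
  rw [MvPolynomial.notMem_support_iff.mp hβ]
  simp

lemma pn_zero : pn r (0 : MvPolynomial (Fin m) ℂ) = 0 := by simp [pn]

lemma pn_one : pn r (1 : MvPolynomial (Fin m) ℂ) = 1 := by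
  classical
  have h1 : (1 : MvPolynomial (Fin m) ℂ) = monomial 0 1 := by
    simp [MvPolynomial.monomial_zero']
  rw [pn, h1, MvPolynomial.support_monomial]
  simp

lemma pn_add_le (hr : 0 ≤ r) (p q : MvPolynomial (Fin m) ℂ) :
    pn r (p + q) ≤ pn r p + pn r q := by
  classical
  rw [pn_eq_of_subset (MvPolynomial.support_add),
    pn_eq_of_subset (s := p.support ∪ q.support) Finset.subset_union_left,
    pn_eq_of_subset (s := p.support ∪ q.support) Finset.subset_union_right,
    ← Finset.sum_add_distrib]
  refine Finset.sum_le_sum fun β _ => ?_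
  rw [MvPolynomial.coeff_add, ← add_mul]
  exact mul_le_mul_of_nonneg_right (norm_add_le _ _) (by positivity)

lemma pn_neg (p : MvPolynomial (Fin m) ℂ) : pn r (-p) = pn r p := by
  simp [pn, MvPolynomial.support_neg]

lemma pn_sub_le (hr : 0 ≤ r) (p q : MvPolynomial (Fin m) ℂ) :
    pn r (p - q) ≤ pn r p + pn r q := by
  rw [sub_eq_add_neg]
  simpa [pn_neg] using pn_add_le hr p (-q)

lemma pn_mul_le (hr : 0 ≤ r) (p q : MvPolynomial (Fin m) ℂ) :
    pn r (p * q) ≤ pn r p * pn r q := by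
  classical
  have key : ∀ β : Fin m →₀ ℕ, MvPolynomial.coeff β (p * q) =
      ∑ x ∈ (p.support ×ˢ q.support).filter (fun x => x.1 + x.2 = β),
        MvPolynomial.coeff x.1 p * MvPolynomial.coeff x.2 q := by
    intro β
    rw [MvPolynomial.coeff_mul]
    refine (Finset.sum_subset ?_ ?_).symm
    · intro x hx
      simp only [Finset.mem_filter] at hx
      rw [Finset.HasAntidiagonal.mem_antidiagonal]
      exact hx.2
    · intro x hx hnx
      simp only [Finset.mem_filter, Finset.mem_product, not_and] at hnx
      rw [Finset.HasAntidiagonal.mem_antidiagonal] at hx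
      by_cases h1 : x.1 ∈ p.support
      · by_cases h2 : x.2 ∈ q.support
        · exact absurd hx (hnx ⟨h1, h2⟩)
        · rw [MvPolynomial.notMem_support_iff.mp h2, mul_zero]
      · rw [MvPolynomial.notMem_support_iff.mp h1, zero_mul]
  calc pn r (p * q)
      = ∑ β ∈ p.support + q.support, ‖MvPolynomial.coeff β (p * q)‖ * r ^ (∑ i, β i) :=
        pn_eq_of_subset (MvPolynomial.support_mul p q)
    _ ≤ ∑ β ∈ p.support + q.support,
          ∑ x ∈ (p.support ×ˢ q.support).filter (fun x => x.1 + x.2 = β),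
            (‖MvPolynomial.coeff x.1 p‖ * r ^ (∑ i, x.1 i)) *
              (‖MvPolynomial.coeff x.2 q‖ * r ^ (∑ i, x.2 i)) := by
        refine Finset.sum_le_sum fun β _ => ?_
        rw [key β]
        calc ‖∑ x ∈ (p.support ×ˢ q.support).filter (fun x => x.1 + x.2 = β),
                MvPolynomial.coeff x.1 p * MvPolynomial.coeff x.2 q‖ * r ^ (∑ i, β i)
            ≤ (∑ x ∈ (p.support ×ˢ q.support).filter (fun x => x.1 + x.2 = β),
                ‖MvPolynomial.coeff x.1 p * MvPolynomial.coeff x.2 q‖) * r ^ (∑ i, β i) :=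
              mul_le_mul_of_nonneg_right (norm_sum_le _ _) (by positivity)
          _ = _ := by
              rw [Finset.sum_mul]
              refine Finset.sum_congr rfl fun x hx => ?_
              simp only [Finset.mem_filter] at hx
              have hβ : (∑ i, β i) = (∑ i, x.1 i) + (∑ i, x.2 i) := by
                rw [← hx.2, ← Finset.sum_add_distrib]
                simp [Finsupp.add_apply]
              rw [hβ, pow_add, norm_mul]
              ring
    _ = ∑ x ∈ p.support ×ˢ q.support,
          (‖MvPolynomial.coeff x.1 p‖ * r ^ (∑ i, x.1 i)) *
            (‖MvPolynomial.coeff x.2 q‖ * r ^ (∑ i, x.2 i)) := by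
        refine Finset.sum_fiberwise_of_maps_to (fun x hx => ?_) _
        simp only [Finset.mem_product] at hx
        exact Finset.add_mem_add hx.1 hx.2
    _ = pn r p * pn r q := by
        rw [pn, pn, Finset.sum_mul_sum, Finset.sum_product]

lemma pn_pow_le (hr : 0 ≤ r) (p : MvPolynomial (Fin m) ℂ) (k : ℕ) :
    pn r (p ^ k) ≤ pn r p ^ k := by
  induction k with
  | zero => simp [pn_one]
  | succ k ih =>
      rw [pow_succ, pow_succ]
      calc pn r (p ^ k * p) ≤ pn r (p ^ k) * pn r p := pn_mul_le hr _ _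
        _ ≤ pn r p ^ k * pn r p :=
          mul_le_mul_of_nonneg_right ih (pn_nonneg hr p)

lemma pn_monomial_le (hr : 0 ≤ r) (d : Fin m →₀ ℕ) (c : ℂ) :
    pn r (monomial d c) ≤ ‖c‖ * r ^ (∑ i, d i) := by
  classical
  by_cases hc : c = 0
  · simp only [hc, map_zero, pn_zero]
    positivity

  · rw [pn, MvPolynomial.support_monomial, if_neg hc, Finset.sum_singleton,
      MvPolynomial.coeff_monomial, if_pos rfl]

lemma pn_C_mul_X_le (hr : 0 ≤ r) (c : ℂ) (i : Fin m) :
    pn r (C c * X i) ≤ ‖c‖ * r := by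
  rw [MvPolynomial.C_mul_X_eq_monomial]
  have h := pn_monomial_le hr (Finsupp.single i 1) c
  have hs : (∑ j, (Finsupp.single i 1 : Fin m →₀ ℕ) j) = 1 := by
    simp [Finsupp.single_apply]
  rw [hs, pow_one] at h
  exact h

lemma pn_prod_le {ι : Type*} (hr : 0 ≤ r) (s : Finset ι) (f : ι → MvPolynomial (Fin m) ℂ) :
    pn r (∏ i ∈ s, f i) ≤ ∏ i ∈ s, pn r (f i) := by
  classical
  induction s using Finset.cons_induction with
  | empty => simp [pn_one]
  | cons i s hi ih =>
      rw [Finset.prod_cons, Finset.prod_cons]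
      calc pn r (f i * ∏ j ∈ s, f j) ≤ pn r (f i) * pn r (∏ j ∈ s, f j) := pn_mul_le hr _ _
        _ ≤ pn r (f i) * ∏ j ∈ s, pn r (f j) :=
          mul_le_mul_of_nonneg_left ih (pn_nonneg hr _)

lemma pn_sum_le {ι : Type*} (hr : 0 ≤ r) (s : Finset ι) (f : ι → MvPolynomial (Fin m) ℂ) :
    pn r (∑ i ∈ s, f i) ≤ ∑ i ∈ s, pn r (f i) := by
  classical
  induction s using Finset.cons_induction with
  | empty => simp [pn_zero]
  | cons i s hi ih =>
      rw [Finset.sum_cons, Finset.sum_cons]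
      calc pn r (f i + ∑ j ∈ s, f j) ≤ pn r (f i) + pn r (∑ j ∈ s, f j) := pn_add_le hr _ _
        _ ≤ pn r (f i) + ∑ j ∈ s, pn r (f j) := by linarith

lemma key_est (n : ℕ) (μ : ℝ) (hμ0 : 0 ≤ μ) (lam : Fin (n + 1) → ℂ)
    (hlam : ∀ i, ‖lam i‖ = μ) (r : ℝ) (hr : 0 < r) (ε : ℝ) (hε : 0 < ε)
    (α : Fin (n + 1) →₀ ℕ) :
    pn r ((∏ l : Fin n, (C (lam l.castSucc) * X l.castSucc +
          C (ε : ℂ) * X l.succ) ^ α l.castSucc) *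
        (C (lam (Fin.last n)) * X (Fin.last n)) ^ α (Fin.last n)
      - ∏ i : Fin (n + 1), (C (lam i) * X i) ^ α i)
    ≤ ε / (μ + ε) * (∑ i, α i : ℕ) * ((μ + ε) * r) ^ (∑ i, α i) := by
  classical
  set t := μ + ε with htdef
  have ht0 : 0 < t := by positivity
  have hμt : μ ≤ t := by simp [htdef]; linarith
  have htr0 : (0:ℝ) ≤ t * r := by positivity
  have hμr : μ * r ≤ t * r := mul_le_mul_of_nonneg_right hμt hr.le
  set A : Fin n → MvPolynomial (Fin (n + 1)) ℂ :=
    fun l => (C (lam l.castSucc) * X l.castSucc + C (ε : ℂ) * X l.succ) with hAdef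
  set B : Fin (n + 1) → MvPolynomial (Fin (n + 1)) ℂ :=
    fun i => (C (lam i) * X i) with hBdef
  have hAle : ∀ l : Fin n, pn r (A l) ≤ t * r := by
    intro l
    calc pn r (A l) ≤ pn r (C (lam l.castSucc) * X l.castSucc) +
          pn r (C (ε : ℂ) * X l.succ) := pn_add_le hr.le _ _
      _ ≤ ‖lam l.castSucc‖ * r + ‖(ε : ℂ)‖ * r :=
          add_le_add (pn_C_mul_X_le hr.le _ _) (pn_C_mul_X_le hr.le _ _)
      _ = t * r := by
          rw [hlam, Complex.norm_real, Real.norm_eq_abs, abs_of_pos hε]; ring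
  have hBle : ∀ (i : Fin (n + 1)) (k : ℕ), pn r (B i ^ k) ≤ (μ * r) ^ k := by
    intro i k
    calc pn r (B i ^ k) ≤ pn r (B i) ^ k := pn_pow_le hr.le _ _
      _ ≤ (μ * r) ^ k := by
          refine pow_le_pow_left₀ (pn_nonneg hr.le _) ?_ k
          simpa [hlam] using pn_C_mul_X_le hr.le (lam i) i
  have hApow : ∀ (l : Fin n) (k : ℕ), pn r (A l ^ k) ≤ (t * r) ^ k := by
    intro l k
    calc pn r (A l ^ k) ≤ pn r (A l) ^ k := pn_pow_le hr.le _ _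
      _ ≤ (t * r) ^ k := pow_le_pow_left₀ (pn_nonneg hr.le _) (hAle l) k
  have hD : ∀ l : Fin n, pn r (A l ^ α l.castSucc - B l.castSucc ^ α l.castSucc)
      ≤ ε / t * (α l.castSucc : ℕ) * (t * r) ^ (α l.castSucc : ℕ) := by
    intro l
    rcases Nat.eq_zero_or_pos (α l.castSucc) with h0 | hpos
    · simp [h0, pn_zero]
    · obtain ⟨j, hj⟩ := Nat.exists_eq_succ_of_ne_zero hpos.ne'
      have hgeom := geom_sum₂_mul (A l) (B l.castSucc) (α l.castSucc)
      have hxy : A l - B l.castSucc = C (ε : ℂ) * X l.succ := by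
        simp [hAdef, hBdef]
      rw [← hgeom, hxy]
      have hG : pn r (∑ i ∈ Finset.range (α l.castSucc),
            A l ^ i * B l.castSucc ^ (α l.castSucc - 1 - i))
          ≤ (α l.castSucc : ℕ) * (t * r) ^ j := by
        calc pn r (∑ i ∈ Finset.range (α l.castSucc),
              A l ^ i * B l.castSucc ^ (α l.castSucc - 1 - i))
            ≤ ∑ i ∈ Finset.range (α l.castSucc),
              pn r (A l ^ i * B l.castSucc ^ (α l.castSucc - 1 - i)) :=
              pn_sum_le hr.le _ _
          _ ≤ ∑ i ∈ Finset.range (α l.castSucc), (t * r) ^ j := by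
              refine Finset.sum_le_sum fun i hi => ?_
              rw [Finset.mem_range] at hi
              have hij : i ≤ j := by omega
              calc pn r (A l ^ i * B l.castSucc ^ (α l.castSucc - 1 - i))
                  ≤ pn r (A l ^ i) * pn r (B l.castSucc ^ (α l.castSucc - 1 - i)) :=
                    pn_mul_le hr.le _ _
                _ ≤ (t * r) ^ i * (μ * r) ^ (α l.castSucc - 1 - i) := by
                    refine mul_le_mul (hApow l i) (hBle _ _) (pn_nonneg hr.le _)
                      (by positivity)
                _ ≤ (t * r) ^ i * (t * r) ^ (α l.castSucc - 1 - i) := by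
                    refine mul_le_mul_of_nonneg_left ?_ (by positivity)
                    exact pow_le_pow_left₀ (by positivity) hμr _
                _ = (t * r) ^ j := by
                    rw [← pow_add]
                    congr 1
                    omega
          _ = (α l.castSucc : ℕ) * (t * r) ^ j := by
              rw [Finset.sum_const, Finset.card_range, nsmul_eq_mul]
      calc pn r ((∑ i ∈ Finset.range (α l.castSucc),
            A l ^ i * B l.castSucc ^ (α l.castSucc - 1 - i)) * (C (ε : ℂ) * X l.succ))
          ≤ pn r (∑ i ∈ Finset.range (α l.castSucc),
              A l ^ i * B l.castSucc ^ (α l.castSucc - 1 - i)) *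
            pn r (C (ε : ℂ) * X l.succ) := pn_mul_le hr.le _ _
        _ ≤ ((α l.castSucc : ℕ) * (t * r) ^ j) * (ε * r) := by
            refine mul_le_mul hG ?_ (pn_nonneg hr.le _) (by positivity)
            simpa [Complex.norm_real, Real.norm_eq_abs, abs_of_pos hε] using
              pn_C_mul_X_le hr.le ((ε : ℂ)) l.succ
        _ = ε / t * (α l.castSucc : ℕ) * (t * r) ^ (α l.castSucc : ℕ) := by
            rw [hj, pow_succ]
            field_simp
  have hind : ∀ s : Finset (Fin n),
      pn r (∏ l ∈ s, A l ^ α l.castSucc - ∏ l ∈ s, B l.castSucc ^ α l.castSucc)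
      ≤ ε / t * (∑ l ∈ s, (α l.castSucc : ℝ)) * (t * r) ^ (∑ l ∈ s, α l.castSucc) := by
    intro s
    induction s using Finset.cons_induction with
    | empty => simp [pn_zero]
    | cons i s hi ih =>
        have hsplit : ∏ l ∈ Finset.cons i s hi, A l ^ α l.castSucc -
            ∏ l ∈ Finset.cons i s hi, B l.castSucc ^ α l.castSucc
            = A i ^ α i.castSucc *
                (∏ l ∈ s, A l ^ α l.castSucc - ∏ l ∈ s, B l.castSucc ^ α l.castSucc)
              + (A i ^ α i.castSucc - B i.castSucc ^ α i.castSucc) *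
                ∏ l ∈ s, B l.castSucc ^ α l.castSucc := by
          rw [Finset.prod_cons, Finset.prod_cons]; ring
        rw [hsplit]
        have h1 : pn r (A i ^ α i.castSucc *
              (∏ l ∈ s, A l ^ α l.castSucc - ∏ l ∈ s, B l.castSucc ^ α l.castSucc))
            ≤ (t * r) ^ (α i.castSucc : ℕ) *
              (ε / t * (∑ l ∈ s, (α l.castSucc : ℝ)) * (t * r) ^ (∑ l ∈ s, α l.castSucc)) := by
          calc _ ≤ pn r (A i ^ α i.castSucc) *
                pn r (∏ l ∈ s, A l ^ α l.castSucc - ∏ l ∈ s, B l.castSucc ^ α l.castSucc) :=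
                pn_mul_le hr.le _ _
            _ ≤ _ := by
                refine mul_le_mul (hApow i _) ih (pn_nonneg hr.le _) (by positivity)
        have hBprod : pn r (∏ l ∈ s, B l.castSucc ^ α l.castSucc)
            ≤ (t * r) ^ (∑ l ∈ s, α l.castSucc) := by
          calc pn r (∏ l ∈ s, B l.castSucc ^ α l.castSucc)
              ≤ ∏ l ∈ s, pn r (B l.castSucc ^ α l.castSucc) := pn_prod_le hr.le _ _
            _ ≤ ∏ l ∈ s, (t * r) ^ (α l.castSucc) := by
                refine Finset.prod_le_prod (fun l _ => pn_nonneg hr.le _) fun l _ => ?_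
                exact le_trans (hBle _ _) (pow_le_pow_left₀ (by positivity) hμr _)
            _ = (t * r) ^ (∑ l ∈ s, α l.castSucc) := Finset.prod_pow_eq_pow_sum _ _ _
        have h2 : pn r ((A i ^ α i.castSucc - B i.castSucc ^ α i.castSucc) *
              ∏ l ∈ s, B l.castSucc ^ α l.castSucc)
            ≤ (ε / t * (α i.castSucc : ℕ) * (t * r) ^ (α i.castSucc : ℕ)) *
              (t * r) ^ (∑ l ∈ s, α l.castSucc) := by
          calc _ ≤ pn r (A i ^ α i.castSucc - B i.castSucc ^ α i.castSucc) *
                pn r (∏ l ∈ s, B l.castSucc ^ α l.castSucc) := pn_mul_le hr.le _ _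
            _ ≤ _ := mul_le_mul (hD i) hBprod (pn_nonneg hr.le _) (by positivity)
        calc pn r (A i ^ α i.castSucc *
              (∏ l ∈ s, A l ^ α l.castSucc - ∏ l ∈ s, B l.castSucc ^ α l.castSucc)
            + (A i ^ α i.castSucc - B i.castSucc ^ α i.castSucc) *
              ∏ l ∈ s, B l.castSucc ^ α l.castSucc)
            ≤ pn r (A i ^ α i.castSucc *
                (∏ l ∈ s, A l ^ α l.castSucc - ∏ l ∈ s, B l.castSucc ^ α l.castSucc))
              + pn r ((A i ^ α i.castSucc - B i.castSucc ^ α i.castSucc) *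
                ∏ l ∈ s, B l.castSucc ^ α l.castSucc) := pn_add_le hr.le _ _
          _ ≤ (t * r) ^ (α i.castSucc : ℕ) *
                (ε / t * (∑ l ∈ s, (α l.castSucc : ℝ)) *
                  (t * r) ^ (∑ l ∈ s, α l.castSucc))
              + (ε / t * (α i.castSucc : ℕ) * (t * r) ^ (α i.castSucc : ℕ)) *
                (t * r) ^ (∑ l ∈ s, α l.castSucc) := add_le_add h1 h2
          _ = ε / t * (∑ l ∈ Finset.cons i s hi, (α l.castSucc : ℝ)) *
                (t * r) ^ (∑ l ∈ Finset.cons i s hi, α l.castSucc) := by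
              rw [Finset.sum_cons, Finset.sum_cons, pow_add]
              push_cast
              ring
  have hks : (∑ i, α i) = (∑ l : Fin n, α l.castSucc) + α (Fin.last n) :=
    Fin.sum_univ_castSucc _
  have hpoly : (∏ l : Fin n, A l ^ α l.castSucc) * B (Fin.last n) ^ α (Fin.last n)
      - ∏ i : Fin (n + 1), B i ^ α i
      = ((∏ l : Fin n, A l ^ α l.castSucc) -
          ∏ l : Fin n, B l.castSucc ^ α l.castSucc) * B (Fin.last n) ^ α (Fin.last n) := by
    rw [Fin.prod_univ_castSucc (f := fun i => B i ^ α i)]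
    ring
  calc pn r ((∏ l : Fin n, A l ^ α l.castSucc) * B (Fin.last n) ^ α (Fin.last n)
        - ∏ i : Fin (n + 1), B i ^ α i)
      = pn r (((∏ l : Fin n, A l ^ α l.castSucc) -
          ∏ l : Fin n, B l.castSucc ^ α l.castSucc) *
          B (Fin.last n) ^ α (Fin.last n)) := by rw [hpoly]
    _ ≤ pn r ((∏ l : Fin n, A l ^ α l.castSucc) -
          ∏ l : Fin n, B l.castSucc ^ α l.castSucc) *
        pn r (B (Fin.last n) ^ α (Fin.last n)) := pn_mul_le hr.le _ _
    _ ≤ (ε / t * (∑ l : Fin n, (α l.castSucc : ℝ)) *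
          (t * r) ^ (∑ l : Fin n, α l.castSucc)) * (t * r) ^ (α (Fin.last n)) := by
        refine mul_le_mul (hind Finset.univ) ?_ (pn_nonneg hr.le _) (by positivity)
        exact le_trans (hBle _ _) (pow_le_pow_left₀ (by positivity) hμr _)
    _ ≤ (ε / t * ((∑ i, α i : ℕ) : ℝ) *
          (t * r) ^ (∑ l : Fin n, α l.castSucc)) * (t * r) ^ (α (Fin.last n)) := by
        have hle : (∑ l : Fin n, (α l.castSucc : ℝ)) ≤ ((∑ i, α i : ℕ) : ℝ) := by
          rw [hks]
          push_cast
          exact le_add_of_nonneg_right (by positivity)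
        gcongr
    _ = ε / t * ((∑ i, α i : ℕ) : ℝ) * (t * r) ^ (∑ i, α i) := by
        rw [hks, pow_add]
        ring

open MvPolynomial in
/-- Estimate of the remainder operator in the majorant polydisc norm.
`φ` is a holomorphic germ vanishing to order `≥ 2`, given by its Taylor
coefficients `a`, on which a single Jordan block `Λ + εN` acts, all of whose
eigenvalues have modulus `μ < 1`.  The coefficients `b` of
`φ∘(Λ + εN) - φ∘Λ` satisfy `|φ∘(Λ+εN) - φ∘Λ|_r ≤ ε * C̃ * |φ|_r` where `C̃`
depends only on `n` and `μ` (not on `r`, `ε` or `φ`). -/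
theorem stmt19 (n : ℕ) (μ : ℝ) (hμ0 : 0 ≤ μ) (hμ1 : μ < 1) :
    ∃ Ctilde : ℝ, ∀ (lam : Fin (n + 1) → ℂ), (∀ i, ‖lam i‖ = μ) →
      ∀ (r : ℝ), 0 < r →
      ∀ (ε : ℝ), 0 < ε → ε < (1 - μ) / 2 →
      ∀ (a : (Fin (n + 1) →₀ ℕ) → ℂ),
        (∀ α : Fin (n + 1) →₀ ℕ, (∑ i, α i) < 2 → a α = 0) →
        Summable (fun α : Fin (n + 1) →₀ ℕ => ‖a α‖ * r ^ (∑ i, α i)) →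
      ∀ (b : (Fin (n + 1) →₀ ℕ) → ℂ),
        (∀ β : Fin (n + 1) →₀ ℕ,
          HasSum (fun α : Fin (n + 1) →₀ ℕ => a α *
            MvPolynomial.coeff β
              ((∏ l : Fin n, (C (lam l.castSucc) * X l.castSucc +
                  C (ε : ℂ) * X l.succ) ^ α l.castSucc) *
                (C (lam (Fin.last n)) * X (Fin.last n)) ^ α (Fin.last n)
              - ∏ i : Fin (n + 1), (C (lam i) * X i) ^ α i)) (b β)) →
        (∑' β : Fin (n + 1) →₀ ℕ, ‖b β‖ * r ^ (∑ i, β i))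
          ≤ ε * Ctilde * ∑' α : Fin (n + 1) →₀ ℕ, ‖a α‖ * r ^ (∑ i, α i) := by
  classical
  refine ⟨2 / (1 - μ), ?_⟩
  intro lam hlam r hr ε hε hεμ a _ha2 haSum b hb
  set Ct : ℝ := 2 / (1 - μ) with hCt
  have hCt0 : 0 < Ct := by rw [hCt]; exact div_pos two_pos (by linarith)
  set t : ℝ := μ + ε with htdef
  have ht0 : 0 < t := by rw [htdef]; linarith
  have ht1 : t < 1 := by rw [htdef]; linarith
  -- the polynomials
  set P : (Fin (n + 1) →₀ ℕ) → MvPolynomial (Fin (n + 1)) ℂ := fun α =>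
    (∏ l : Fin n, (C (lam l.castSucc) * X l.castSucc +
        C (ε : ℂ) * X l.succ) ^ α l.castSucc) *
      (C (lam (Fin.last n)) * X (Fin.last n)) ^ α (Fin.last n)
    - ∏ i : Fin (n + 1), (C (lam i) * X i) ^ α i with hPdef
  -- the key estimate with uniform constant
  have hPle : ∀ α : Fin (n + 1) →₀ ℕ, pn r (P α) ≤ ε * Ct * r ^ (∑ i, α i) := by
    intro α
    refine le_trans (key_est n μ hμ0 lam hlam r hr ε hε α) ?_
    set k : ℕ := ∑ i, α i
    have hk : (k : ℝ) * t ^ k ≤ t * Ct := by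
      have h1 : (k : ℝ) * t ^ k = ∑ _j ∈ Finset.range k, t ^ k := by
        rw [Finset.sum_const, Finset.card_range, nsmul_eq_mul]
      have h2 : ∑ _j ∈ Finset.range k, t ^ k ≤ ∑ j ∈ Finset.range k, t ^ (j + 1) := by
        refine Finset.sum_le_sum fun j hj => ?_
        rw [Finset.mem_range] at hj
        exact pow_le_pow_of_le_one ht0.le ht1.le (by omega)
      have h3 : ∑ j ∈ Finset.range k, t ^ (j + 1) = t * ∑ j ∈ Finset.range k, t ^ j := by
        rw [Finset.mul_sum]
        exact Finset.sum_congr rfl fun j _ => by ring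
      have h4 : ∑ j ∈ Finset.range k, t ^ j ≤ (1 - t)⁻¹ := by
        refine le_trans (Summable.sum_le_tsum (Finset.range k)
          (fun j _ => by positivity) (summable_geometric_of_lt_one ht0.le ht1)) ?_
        rw [tsum_geometric_of_lt_one ht0.le ht1]
      have h5 : (1 - t)⁻¹ ≤ Ct := by
        have h1t : (1 - μ) / 2 ≤ 1 - t := by rw [htdef]; linarith
        have hpos : (0:ℝ) < (1 - μ) / 2 := by linarith
        calc (1 - t)⁻¹ ≤ ((1 - μ) / 2)⁻¹ := by
              exact inv_anti₀ hpos h1t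
          _ = 2 / (1 - μ) := by rw [inv_div]
          _ = Ct := hCt.symm
      calc (k : ℝ) * t ^ k ≤ t * ∑ j ∈ Finset.range k, t ^ j := by
            rw [h1, ← h3] at *; exact h2
        _ ≤ t * Ct := by
            refine mul_le_mul_of_nonneg_left (le_trans h4 h5) ht0.le
    calc ε / t * (k : ℝ) * (t * r) ^ k = (ε / t) * ((k : ℝ) * t ^ k) * r ^ k := by
          rw [mul_pow]; ring
      _ ≤ (ε / t) * (t * Ct) * r ^ k := by
          refine mul_le_mul_of_nonneg_right (mul_le_mul_of_nonneg_left hk (by positivity))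
            (by positivity)
      _ = ε * Ct * r ^ k := by field_simp
  -- double summability
  set F : ((Fin (n + 1) →₀ ℕ) × (Fin (n + 1) →₀ ℕ)) → ℝ := fun x =>
    ‖a x.1‖ * (‖MvPolynomial.coeff x.2 (P x.1)‖ * r ^ (∑ i, x.2 i)) with hFdef
  have hF0 : ∀ x, 0 ≤ F x := fun x => by positivity
  have hFfib : ∀ α, Summable fun β => F (α, β) := by
    intro α
    refine summable_of_ne_finset_zero (s := (P α).support) fun β hβ => ?_
    simp [hFdef, MvPolynomial.notMem_support_iff.mp hβ]
  have hcol : ∀ α, (∑' β, F (α, β)) = ‖a α‖ * pn r (P α) := by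
    intro α
    calc (∑' β, F (α, β))
        = ∑' β : Fin (n + 1) →₀ ℕ,
            ‖a α‖ * (‖MvPolynomial.coeff β (P α)‖ * r ^ (∑ i, β i)) := rfl
      _ = ‖a α‖ * ∑' β : Fin (n + 1) →₀ ℕ,
            ‖MvPolynomial.coeff β (P α)‖ * r ^ (∑ i, β i) := tsum_mul_left
      _ = ‖a α‖ * pn r (P α) := by rw [pn_tsum_eq]
  have hFsum : Summable F := by
    refine (summable_prod_of_nonneg hF0).mpr ⟨hFfib, ?_⟩
    refine Summable.of_nonneg_of_le (fun α => tsum_nonneg fun β => hF0 _)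
      (fun α => ?_) ((haSum.mul_left (ε * Ct)))
    rw [hcol α]
    calc ‖a α‖ * pn r (P α) ≤ ‖a α‖ * (ε * Ct * r ^ (∑ i, α i)) :=
          mul_le_mul_of_nonneg_left (hPle α) (norm_nonneg _)
      _ = ε * Ct * (‖a α‖ * r ^ (∑ i, α i)) := by ring
  have hFswap : Summable fun x : (Fin (n + 1) →₀ ℕ) × (Fin (n + 1) →₀ ℕ) =>
      F (x.2, x.1) := by
    have := hFsum.prod_symm
    simpa [Prod.swap] using this
  have hβfib : ∀ β, Summable fun α => F (α, β) := fun β => hFswap.prod_factor β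
  have hSβ : Summable fun β => ∑' α, F (α, β) :=
    ((summable_prod_of_nonneg (fun x => hF0 _)).mp hFswap).2
  -- pointwise bound on b
  have hbb : ∀ β : Fin (n + 1) →₀ ℕ, ‖b β‖ * r ^ (∑ i, β i) ≤ ∑' α, F (α, β) := by
    intro β
    have hnormsum : Summable fun α => ‖a α * MvPolynomial.coeff β (P α)‖ := by
      have h := (hβfib β).mul_right ((r ^ (∑ i, β i))⁻¹)
      refine h.congr fun α => ?_
      show (‖a α‖ * (‖MvPolynomial.coeff β (P α)‖ * r ^ (∑ i, β i))) *
          (r ^ (∑ i, β i))⁻¹ = ‖a α * MvPolynomial.coeff β (P α)‖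
      rw [norm_mul]
      have hrp : (0:ℝ) < r ^ (∑ i, β i) := pow_pos hr _
      field_simp
    have h1 : ‖b β‖ ≤ ∑' α, ‖a α * MvPolynomial.coeff β (P α)‖ := by
      rw [← (hb β).tsum_eq]
      exact norm_tsum_le_tsum_norm hnormsum
    calc ‖b β‖ * r ^ (∑ i, β i)
        ≤ (∑' α, ‖a α * MvPolynomial.coeff β (P α)‖) * r ^ (∑ i, β i) :=
          mul_le_mul_of_nonneg_right h1 (by positivity)
      _ = ∑' α, F (α, β) := by
          rw [← tsum_mul_right]
          refine tsum_congr fun α => ?_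
          show ‖a α * MvPolynomial.coeff β (P α)‖ * r ^ (∑ i, β i) =
            ‖a α‖ * (‖MvPolynomial.coeff β (P α)‖ * r ^ (∑ i, β i))
          rw [norm_mul]
          ring
  have hbsum : Summable fun β : Fin (n + 1) →₀ ℕ => ‖b β‖ * r ^ (∑ i, β i) :=
    Summable.of_nonneg_of_le (fun β => by positivity) hbb hSβ
  -- final chain
  calc (∑' β : Fin (n + 1) →₀ ℕ, ‖b β‖ * r ^ (∑ i, β i))
      ≤ ∑' β, ∑' α, F (α, β) := Summable.tsum_le_tsum hbb hbsum hSβ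
    _ = ∑' α, ∑' β, F (α, β) := by
        refine Summable.tsum_comm ?_
        exact hFsum
    _ = ∑' α, ‖a α‖ * pn r (P α) := tsum_congr hcol
    _ ≤ ∑' α, ε * Ct * (‖a α‖ * r ^ (∑ i, α i)) := by
        refine Summable.tsum_le_tsum (fun α => ?_) ?_ (haSum.mul_left (ε * Ct))
        · calc ‖a α‖ * pn r (P α) ≤ ‖a α‖ * (ε * Ct * r ^ (∑ i, α i)) :=
              mul_le_mul_of_nonneg_left (hPle α) (norm_nonneg _)
            _ = ε * Ct * (‖a α‖ * r ^ (∑ i, α i)) := by ring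
        · refine Summable.congr ((summable_prod_of_nonneg hF0).mp hFsum).2 fun α => hcol α
    _ = ε * Ct * ∑' α : Fin (n + 1) →₀ ℕ, ‖a α‖ * r ^ (∑ i, α i) := tsum_mul_left
end
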